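/- Let 𝔤 be a nilpotent Lie algebra over ℝ and X, Y ∈ 𝔤. If [X,[X,Y]] lies in the span of X, Y, and [X,Y], then [X,[X,Y]] = 0. -/

import Mathlib

open Module

theorem stmt_1 (L : Type*) [LieRing L] [LieAlgebra ℝ L] [FiniteDimensional ℝ L]
    [LieRing.IsNilpotent L] (X Y : L)
    (h : ⁅X, ⁅X, Y⁆⁆ ∈ Submodule.span ℝ ({X, Y, ⁅X, Y⁆} : Set L)) : ⁅X, ⁅X, Y⁆⁆ = 0 := by
  obtain ⟨a, u, hu, hW⟩ := Submodule.mem_span_insert.mp h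
  obtain ⟨b, v, hv, rfl⟩ := Submodule.mem_span_insert.mp hu
  obtain ⟨c, rfl⟩ := Submodule.mem_span_singleton.mp hv
  set Z : L := ⁅X, Y⁆ with hZdef
  set W : L := ⁅X, Z⁆ with hWdef
  -- hW : W = a • X + (b • Y + c • Z)
  set T : Module.End ℝ L := LieModule.toEnd ℝ L L X with hTdef
  have hTapp : ∀ m : L, T m = ⁅X, m⁆ := fun m => rfl
  have hTX : T X = 0 := by rw [hTapp]; exact lie_self X
  have hTY : T Y = Z := rfl
  have hTZ : T Z = W := rfl
  have hTW : T W = b • Z + c • W := by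
    conv_lhs => rw [hTapp, hW]
    rw [lie_add, lie_smul, lie_self, smul_zero, zero_add, lie_add, lie_smul, lie_smul]
  obtain ⟨N, hN⟩ := LieModule.isNilpotent_toEnd_of_isNilpotent ℝ L L X
  -- the span of {Z, W} is T-invariant
  set U : Submodule ℝ L := Submodule.span ℝ ({Z, W} : Set L) with hUdef
  have hZU : Z ∈ U := Submodule.subset_span (Set.mem_insert _ _)
  have hWU : W ∈ U := Submodule.subset_span (Set.mem_insert_of_mem _ rfl)
  have hInv : ∀ x ∈ U, T x ∈ U := by
    intro x hx
    induction hx using Submodule.span_induction with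
    | mem x hx =>
      rcases hx with rfl | hx
      · rw [hTZ]; exact hWU
      · rcases hx with rfl
        rw [hTW]
        exact Submodule.add_mem _ (Submodule.smul_mem _ _ hZU) (Submodule.smul_mem _ _ hWU)
    | zero => simp
    | add x y _ _ hx hy => rw [map_add]; exact Submodule.add_mem _ hx hy
    | smul t x _ hx => rw [map_smul]; exact Submodule.smul_mem _ _ hx
  -- the restriction is nilpotent, hence squares to zero since dim U ≤ 2
  have hSnil : IsNilpotent (T.restrict hInv) := by
    refine ⟨N, ?_⟩
    ext x
    rw [Module.End.pow_restrict]
    simp [LinearMap.restrict_apply, hTdef, hN]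
  have hdim : finrank ℝ U ≤ 2 := by
    classical
    refine le_trans (finrank_span_le_card _) ?_
    rw [Set.toFinset_insert, Set.toFinset_singleton]
    exact le_trans (Finset.card_insert_le _ _) (by simp)
  have hSsq : (T.restrict hInv) ^ 2 = 0 := by
    have h1 : (T.restrict hInv) ^ finrank ℝ U = 0 := by
      have h2 := LinearMap.aeval_self_charpoly (T.restrict hInv)
      rw [hSnil.charpoly_eq_X_pow_finrank] at h2
      simpa using h2
    exact pow_eq_zero_of_le hdim h1
  have hTW0 : T W = 0 := by
    have := congrArg (Subtype.val) (LinearMap.ext_iff.mp hSsq ⟨Z, hZU⟩)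
    rw [Module.End.pow_restrict] at this
    simpa [LinearMap.restrict_apply, pow_succ, hTZ] using this
  have key : b • Z + c • W = 0 := by rw [← hTW, hTW0]
  -- derive b ^ 2 • Z = 0
  have hb2 : (b * b) • Z = 0 := by
    have e1 : (b + c * c) • W = (a * b) • X + (b * b) • Y := by
      have : b • W = (a * b) • X + ((b * b) • Y + c • (b • Z)) := by
        rw [hW]; module
      rw [show b • Z = - (c • W) by linear_combination (norm := module) key] at this
      linear_combination (norm := module) this
    have e2 := congrArg T e1
    rw [map_smul, hTW0, smul_zero, map_add, map_smul, map_smul, hTX, hTY, smul_zero,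
      zero_add] at e2
    exact e2.symm
  by_cases hb : b = 0
  · rw [hb, zero_smul, zero_add] at key
    by_cases hc : c = 0
    · rw [hb, hc] at hW
      simp only [zero_smul, add_zero, zero_add] at hW
      -- W = a • X : use the lower central series
      by_cases ha : a = 0
      · rw [hW, ha, zero_smul]
      · have hmem : ∀ n, W ∈ LieModule.lowerCentralSeries ℝ L L n := by
          intro n
          induction n with
          | zero => simp [LieModule.lowerCentralSeries_zero]
          | succ n ih =>
            have hXmem : X ∈ LieModule.lowerCentralSeries ℝ L L n := by
              have : X = a⁻¹ • W := by rw [hW, smul_smul, inv_mul_cancel₀ ha, one_smul]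
              rw [this]
              exact Submodule.smul_mem _ _ ih
            rw [LieModule.lowerCentralSeries_succ]
            have : W = -⁅Z, X⁆ := by rw [hWdef, ← lie_skew]
            rw [this]
            exact neg_mem (LieSubmodule.lie_mem_lie (LieSubmodule.mem_top Z) hXmem)
        obtain ⟨k, hk⟩ := LieModule.IsNilpotent.nilpotent ℝ L L
        have := hmem k
        rw [hk] at this
        simpa using this
    · exact (smul_eq_zero.mp key).resolve_left hc
  · have hZ0 : Z = 0 := (smul_eq_zero.mp hb2).resolve_left (mul_ne_zero hb hb)
    rw [hWdef, hZ0, lie_zero]
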